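/- Let (X_n) be i.i.d. positive square integrable random variables with mean μ > 0, variance σ² > 0, γ = σ/μ, and C_{n,k} = S_{n,k}/((n-1)μ) with S_{n,k} = ∑_{i=1}^n X_i - X_k. Then (4/(γ√n)) ∑_{k=1}^n (C_{n,k} - 1)² converges to 0 in probability as n → ∞. -/

import Mathlib

open MeasureTheory ProbabilityTheory Filter Topology

/-- `(4/(γ√n)) ∑_{k=1}^n (C_{n,k} - 1)²` converges to 0 in probability. -/
theorem sum_sq_tendsto_zero_in_probability
    {Ω : Type*} [MeasureSpace Ω] [IsProbabilityMeasure (ℙ : Measure Ω)]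
    (X : ℕ → Ω → ℝ) (hmeas : ∀ i, Measurable (X i))
    (hindep : iIndepFun X ℙ)
    (hident : ∀ i, IdentDistrib (X i) (X 0) ℙ ℙ)
    (hpos : ∀ i, ∀ ω, 0 < X i ω)
    (hL2 : MemLp (X 0) 2 ℙ)
    (μ σ γ : ℝ) (hμ : 0 < μ) (hσ : 0 < σ)
    (hmean : ∫ ω, X 0 ω ∂ℙ = μ)
    (hvar : variance (X 0) ℙ = σ ^ 2)
    (hγ : γ = σ / μ)
    (C : ℕ → ℕ → Ω → ℝ)
    (hC : ∀ n k ω, C n k ω = ((∑ i ∈ Finset.range n, X i ω) - X k ω) / (((n : ℝ) - 1) * μ)) :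
    ∀ r : ℝ, 0 < r →
      Tendsto
        (fun n : ℕ =>
          ℙ {ω | r ≤ (4 / (γ * Real.sqrt n)) * ∑ k ∈ Finset.range n, (C n k ω - 1) ^ 2})
        atTop (𝓝 0) := by
  intro r hr
  have hγpos : 0 < γ := by rw [hγ]; positivity
  have hL2' : ∀ i, MemLp (X i) 2 ℙ := fun i => (hident i).symm.memLp_snd hL2
  have hint : ∀ i, Integrable (X i) ℙ := fun i => (hL2' i).integrable one_le_two
  have hmean' : ∀ i, ∫ ω, X i ω ∂ℙ = μ := fun i => by rw [(hident i).integral_eq, hmean]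
  have hvar' : ∀ i, variance (X i) ℙ = σ ^ 2 := fun i => by rw [(hident i).variance_eq, hvar]
  have hZ2 : ∀ i, MemLp (fun ω => X i ω - μ) 2 ℙ := fun i => (hL2' i).sub (memLp_const μ)
  have hZsq : ∀ i, ∫ ω, (X i ω - μ) ^ 2 ∂ℙ = σ ^ 2 := by
    intro i
    have h := variance_eq_integral (hL2' i).aemeasurable
    rw [hvar' i] at h
    simp only [Pi.pow_apply, Pi.sub_apply, hmean' i] at h
    exact h.symm
  -- the constant in the eventual bound
  set K : ℝ := 8 * σ ^ 2 / (γ * μ ^ 2 * r) with hK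
  have hK0 : 0 ≤ K := by positivity
  -- main eventual bound
  have hbound : ∀ᶠ n : ℕ in atTop,
      (ℙ {ω | r ≤ (4 / (γ * Real.sqrt n)) *
        ∑ k ∈ Finset.range n, (C n k ω - 1) ^ 2}).toReal ≤ K * (Real.sqrt n)⁻¹ := by
    filter_upwards [eventually_ge_atTop 2] with n hn
    have hn1 : (1 : ℝ) ≤ (n : ℝ) - 1 := by
      have : (2 : ℝ) ≤ (n : ℝ) := by exact_mod_cast hn
      linarith
    have hnpos : (0 : ℝ) < (n : ℝ) := by
      have : (2 : ℝ) ≤ (n : ℝ) := by exact_mod_cast hn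
      linarith
    have hsq : 0 < Real.sqrt n := Real.sqrt_pos.2 hnpos
    have hd : ((n : ℝ) - 1) * μ ≠ 0 := by positivity
    set A : Ω → ℝ := fun ω => ∑ i ∈ Finset.range n, (X i ω - μ) with hA
    have hAX : ∀ ω, A ω = (∑ i ∈ Finset.range n, X i ω) - n * μ := by
      intro ω
      simp [hA, Finset.sum_sub_distrib, Finset.sum_const, Finset.card_range, nsmul_eq_mul]
    -- pointwise identity
    have hterm : ∀ k ω, C n k ω - 1 = (A ω - (X k ω - μ)) / (((n : ℝ) - 1) * μ) := by
      intro k ω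
      rw [hC, hAX]
      field_simp
      ring
    have hsum : ∀ ω, ∑ k ∈ Finset.range n, (C n k ω - 1) ^ 2
        = ((((n : ℝ) - 1) * μ)⁻¹) ^ 2 *
          (((n : ℝ) - 2) * (A ω) ^ 2 + ∑ k ∈ Finset.range n, (X k ω - μ) ^ 2) := by
      intro ω
      have h1 : ∑ k ∈ Finset.range n, (C n k ω - 1) ^ 2
          = ∑ k ∈ Finset.range n,
              ((((n : ℝ) - 1) * μ)⁻¹) ^ 2 * (A ω - (X k ω - μ)) ^ 2 := by
        refine Finset.sum_congr rfl fun k _ => ?_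
        rw [hterm k ω, div_eq_mul_inv, mul_pow]
        ring
      have h3 : ∑ k ∈ Finset.range n, (A ω - (X k ω - μ)) ^ 2
          = ((n : ℝ) - 2) * (A ω) ^ 2 + ∑ k ∈ Finset.range n, (X k ω - μ) ^ 2 := by
        have h2 : ∑ k ∈ Finset.range n, (X k ω - μ) = A ω := rfl
        simp_rw [sub_sq]
        rw [Finset.sum_add_distrib, Finset.sum_sub_distrib, Finset.sum_const,
          Finset.card_range, ← Finset.mul_sum, h2, nsmul_eq_mul]
        ring
      rw [h1, ← Finset.mul_sum, h3]
    -- moments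
    have hA2mem : MemLp A 2 ℙ := by
      have := memLp_finset_sum (Finset.range n) (fun i (_ : i ∈ Finset.range n) => hZ2 i)
      exact this
    have hA2int : Integrable (fun ω => (A ω) ^ 2) ℙ := hA2mem.integrable_sq
    have hSmem : MemLp (∑ i ∈ Finset.range n, X i) 2 ℙ :=
      memLp_finset_sum' _ (fun i _ => hL2' i)
    have hES : ∫ ω, (∑ i ∈ Finset.range n, X i) ω ∂ℙ = (n : ℝ) * μ := by
      simp only [Finset.sum_apply]
      rw [integral_finset_sum _ (fun i _ => hint i)]
      simp [hmean']
    have hvs : variance (∑ i ∈ Finset.range n, X i) ℙ = (n : ℝ) * σ ^ 2 := by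
      rw [IndepFun.variance_sum (fun i _ => hL2' i)
        (fun i _ j _ hij => hindep.indepFun hij)]
      simp [hvar']
    have hintA2 : ∫ ω, (A ω) ^ 2 ∂ℙ = (n : ℝ) * σ ^ 2 := by
      have h := variance_eq_integral hSmem.aemeasurable
      rw [hvs] at h
      rw [h]
      refine integral_congr_ae (Filter.Eventually.of_forall fun ω => ?_)
      have hES' : ∫ x, ∑ c ∈ Finset.range n, X c x ∂ℙ = (n : ℝ) * μ := by
        simpa only [Finset.sum_apply] using hES
      simp only [Pi.pow_apply, Pi.sub_apply, Finset.sum_apply, hES', hAX ω]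
    -- integral of the sum of squares
    have hIY : ∫ ω, ∑ k ∈ Finset.range n, (C n k ω - 1) ^ 2 ∂ℙ
        = ((((n : ℝ) - 1) * μ)⁻¹) ^ 2 *
          (((n : ℝ) - 2) * ((n : ℝ) * σ ^ 2) + (n : ℝ) * σ ^ 2) := by
      rw [integral_congr_ae (Filter.Eventually.of_forall hsum), integral_const_mul,
        integral_add (hA2int.const_mul _)
          (integrable_finset_sum _ (fun i _ => (hZ2 i).integrable_sq)),
        integral_const_mul, hintA2,
        integral_finset_sum _ (fun i _ => (hZ2 i).integrable_sq)]
      simp [hZsq, Finset.sum_const, Finset.card_range, nsmul_eq_mul]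
    -- integrability of the whole expression
    have hYint : Integrable (fun ω => ∑ k ∈ Finset.range n, (C n k ω - 1) ^ 2) ℙ := by
      refine Integrable.congr ?_ (Filter.Eventually.of_forall fun ω => (hsum ω).symm)
      exact ((hA2int.const_mul _).add
        (integrable_finset_sum _ (fun i _ => (hZ2 i).integrable_sq))).const_mul _
    have hfint : Integrable (fun ω => (4 / (γ * Real.sqrt n)) *
        ∑ k ∈ Finset.range n, (C n k ω - 1) ^ 2) ℙ := hYint.const_mul _
    have hfnonneg : 0 ≤ᵐ[ℙ] fun ω => (4 / (γ * Real.sqrt n)) *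
        ∑ k ∈ Finset.range n, (C n k ω - 1) ^ 2 := by
      refine Filter.Eventually.of_forall fun ω => ?_
      have h1 : (0 : ℝ) ≤ 4 / (γ * Real.sqrt n) := by positivity
      exact mul_nonneg h1 (Finset.sum_nonneg fun k _ => sq_nonneg _)
    have hM := mul_meas_ge_le_integral_of_nonneg hfnonneg hfint r
    have hIf : ∫ ω, (4 / (γ * Real.sqrt n)) *
        ∑ k ∈ Finset.range n, (C n k ω - 1) ^ 2 ∂ℙ
        = (4 / (γ * Real.sqrt n)) * (((((n : ℝ) - 1) * μ)⁻¹) ^ 2 *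
          (((n : ℝ) - 2) * ((n : ℝ) * σ ^ 2) + (n : ℝ) * σ ^ 2)) := by
      rw [integral_const_mul, hIY]
    rw [hIf] at hM
    -- the explicit bound
    set B : ℝ := (4 / (γ * Real.sqrt n)) * (((((n : ℝ) - 1) * μ)⁻¹) ^ 2 *
      (((n : ℝ) - 2) * ((n : ℝ) * σ ^ 2) + (n : ℝ) * σ ^ 2)) / r with hB
    have hgB : (ℙ {ω | r ≤ (4 / (γ * Real.sqrt n)) *
        ∑ k ∈ Finset.range n, (C n k ω - 1) ^ 2}).toReal ≤ B := by
      rw [hB, le_div_iff₀ hr]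
      calc (ℙ {ω | r ≤ (4 / (γ * Real.sqrt n)) *
            ∑ k ∈ Finset.range n, (C n k ω - 1) ^ 2}).toReal * r
          = r * (ℙ {ω | r ≤ (4 / (γ * Real.sqrt n)) *
            ∑ k ∈ Finset.range n, (C n k ω - 1) ^ 2}).toReal := by ring
        _ ≤ _ := hM
    refine hgB.trans ?_
    -- B ≤ K / √n
    have hn1' : ((n : ℝ) - 1) ≠ 0 := by linarith
    have hBeq : B = (4 * σ ^ 2 / (γ * μ ^ 2 * r)) * ((n : ℝ) / ((n : ℝ) - 1))
        * (Real.sqrt n)⁻¹ := by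
      rw [hB]
      field_simp
      ring
    have hfrac : (n : ℝ) / ((n : ℝ) - 1) ≤ 2 := by
      rw [div_le_iff₀ (by linarith)]
      have : (2 : ℝ) ≤ (n : ℝ) := by exact_mod_cast hn
      linarith
    have hc0 : (0 : ℝ) ≤ 4 * σ ^ 2 / (γ * μ ^ 2 * r) := by positivity
    calc B = (4 * σ ^ 2 / (γ * μ ^ 2 * r)) * ((n : ℝ) / ((n : ℝ) - 1))
          * (Real.sqrt n)⁻¹ := hBeq
      _ ≤ (4 * σ ^ 2 / (γ * μ ^ 2 * r)) * 2 * (Real.sqrt n)⁻¹ := by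
          gcongr
      _ = K * (Real.sqrt n)⁻¹ := by rw [hK]; ring_nf
  -- the upper bound tends to zero
  have hsqrt_top : Tendsto (fun n : ℕ => Real.sqrt n) atTop atTop := by
    refine (tendsto_atTop_atTop_of_monotone (fun a b hab => Real.sqrt_le_sqrt hab) ?_).comp
      tendsto_natCast_atTop_atTop
    intro b
    exact ⟨b ^ 2, by rw [Real.sqrt_sq_eq_abs]; exact le_abs_self b⟩
  have hKlim : Tendsto (fun n : ℕ => K * (Real.sqrt n)⁻¹) atTop (𝓝 0) := by
    have := hsqrt_top.inv_tendsto_atTop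
    simpa using this.const_mul K
  have htoReal : Tendsto (fun n : ℕ =>
      (ℙ {ω | r ≤ (4 / (γ * Real.sqrt n)) *
        ∑ k ∈ Finset.range n, (C n k ω - 1) ^ 2}).toReal) atTop (𝓝 0) :=
    squeeze_zero' (Filter.Eventually.of_forall fun n => ENNReal.toReal_nonneg) hbound hKlim
  have hne : ∀ n : ℕ, ℙ {ω | r ≤ (4 / (γ * Real.sqrt n)) *
      ∑ k ∈ Finset.range n, (C n k ω - 1) ^ 2} ≠ ⊤ := fun n => measure_ne_top _ _
  have := (ENNReal.tendsto_toReal_iff hne ENNReal.zero_ne_top).mp (by simpa using htoReal)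
  simpa using this
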